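/- For every v ∈ L¹(ℝ), ∫_ℝ ((J∗v)(x) − v(x)) · 1_{\{v(x) > 0\}} dx ≤ 0, where 1_{\{v>0\}} is the indicator function of the set where v is positive. -/

import Mathlib

open MeasureTheory Filter
open scoped Convolution

theorem stmt7
    (J : ℝ → ℝ) (hJpos : ∀ x, 0 ≤ J x) (hJeven : ∀ x, J (-x) = J x)
    (hJint : Integrable J) (hJmass : ∫ x, J x = 1)
    (v : ℝ → ℝ) (hv : Integrable v) :
    (∫ x, ((∫ y, J (x - y) * v y) - v x) * Set.indicator {x : ℝ | 0 < v x} 1 x) ≤ 0 := by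
  set L := ContinuousLinearMap.mul ℝ ℝ with hL
  set p : ℝ → ℝ := fun x => max (v x) 0 with hp
  have hpint : Integrable p := hv.pos_part
  have hpnn : ∀ x, 0 ≤ p x := fun x => le_max_right _ _
  have hvlep : ∀ x, v x ≤ p x := fun x => le_max_left _ _
  -- the convolution in the statement
  have hconv_eq : ∀ x, (∫ y, J (x - y) * v y) = (v ⋆[L] J) x := by
    intro x
    rw [convolution_def]
    congr 1
    ext y
    simp [hL, ContinuousLinearMap.mul_apply', mul_comm]
  set φ : ℝ → ℝ := Set.indicator {x : ℝ | 0 < v x} 1 with hφ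
  have hφ01 : ∀ x, φ x = 0 ∨ φ x = 1 := by
    intro x
    by_cases h : x ∈ {x : ℝ | 0 < v x}
    · right; simp [hφ, Set.indicator_of_mem h]
    · left; simp [hφ, Set.indicator_of_notMem h]
  have hφmeas : AEStronglyMeasurable φ volume := by
    have : φ = fun x => Set.indicator (Set.Ioi (0:ℝ)) 1 (v x) := by
      funext x
      by_cases h : 0 < v x
      · simp [hφ, Set.indicator_of_mem, h, Set.mem_Ioi]
      · simp [hφ, Set.indicator_of_notMem, h, Set.mem_Ioi]
    rw [this]
    exact ((measurable_one.indicator measurableSet_Ioi).comp_aemeasurable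
      hv.aemeasurable).aestronglyMeasurable
  have hφbdd : ∃ C, ∀ x, ‖φ x‖ ≤ C := by
    refine ⟨1, fun x => ?_⟩
    rcases hφ01 x with h | h <;> simp [h]
  have hcv : Integrable (v ⋆[L] J) := hv.integrable_convolution L hJint
  have hcp : Integrable (p ⋆[L] J) := hpint.integrable_convolution L hJint
  have hcvφ : Integrable (fun x => (v ⋆[L] J) x * φ x) := by
    have := hcv.bdd_mul hφmeas (Eventually.of_forall hφbdd.choose_spec)
    simpa [mul_comm] using this
  have hvφ : Integrable (fun x => v x * φ x) := by
    have := hv.bdd_mul hφmeas (Eventually.of_forall hφbdd.choose_spec)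
    simpa [mul_comm] using this
  -- v * φ = p
  have hvφp : ∀ x, v x * φ x = p x := by
    intro x
    by_cases h : 0 < v x
    · simp [hφ, Set.indicator_of_mem, h, hp, max_eq_left h.le]
    · simp [hφ, Set.indicator_of_notMem, h, hp, max_eq_right (not_lt.mp h)]
  -- a.e. (v ⋆ J) x * φ x ≤ (p ⋆ J) x
  have hae : ∀ᵐ x, (v ⋆[L] J) x * φ x ≤ (p ⋆[L] J) x := by
    have h1 := hv.ae_convolution_exists L hJint
    have h2 := hpint.ae_convolution_exists L hJint
    filter_upwards [h1, h2] with x hx1 hx2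
    have hle : (v ⋆[L] J) x ≤ (p ⋆[L] J) x := by
      rw [convolution_def, convolution_def]
      refine integral_mono hx1 hx2 fun t => ?_
      simp only [ContinuousLinearMap.mul_apply']
      exact mul_le_mul_of_nonneg_right (hvlep t) (hJpos _)
    have hnn : 0 ≤ (p ⋆[L] J) x := by
      rw [convolution_def]
      refine integral_nonneg fun t => ?_
      simp only [ContinuousLinearMap.mul_apply']
      exact mul_nonneg (hpnn t) (hJpos _)
    rcases hφ01 x with h | h
    · simpa [h] using hnn
    · simpa [h] using hle
  have hIp : ∫ x, (p ⋆[L] J) x = ∫ x, p x := by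
    rw [integral_convolution L hpint hJint, hJmass]
    simp [hL]
  calc (∫ x, ((∫ y, J (x - y) * v y) - v x) * φ x)
      = ∫ x, ((v ⋆[L] J) x * φ x - v x * φ x) := by
        congr 1; funext x; rw [hconv_eq x]; ring
    _ = (∫ x, (v ⋆[L] J) x * φ x) - ∫ x, v x * φ x := integral_sub hcvφ hvφ
    _ ≤ (∫ x, (p ⋆[L] J) x) - ∫ x, p x := by
        have h2 : (∫ x, v x * φ x) = ∫ x, p x :=
          integral_congr_ae (Eventually.of_forall fun x => hvφp x)
        rw [h2]
        exact sub_le_sub_right (integral_mono_ae hcvφ hcp hae) _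
    _ = 0 := by rw [hIp]; ring
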